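/- arXiv:2602.20380 — 12 statements merged into one kernel-verified Lean document; each statement's English description precedes it below -/
import Mathlib

section
/- The variety of bounded lattices has the superamalgamation property: for all bounded lattices K, L₁, L₂ and injective bounded lattice homomorphisms h₁ : K → L₁ and h₂ : K → L₂, there exist a bounded lattice M and injective bounded lattice homomorphisms p₁ : L₁ → M and p₂ : L₂ → M such that p₁ ∘ h₁ = p₂ ∘ h₂, and moreover for all a ∈ L₁ and b ∈ L₂, if p₁(a) ≤ p₂(b) then there exists c ∈ K with a ≤ h₁(c) and h₂(c) ≤ b. -/
open Function Set

section Amalg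

variable {K L₁ L₂ : Type} [Lattice K] [BoundedOrder K] [Lattice L₁] [BoundedOrder L₁]
  [Lattice L₂] [BoundedOrder L₂]

theorem amalg_le_of_map_le {A B : Type} [Lattice A] [Lattice B] [BoundedOrder A] [BoundedOrder B]
    (f : BoundedLatticeHom A B) (hf : Function.Injective f) {x y : A} (h : f x ≤ f y) : x ≤ y := by
  have : x ⊓ y = x := hf (by rw [map_inf]; exact inf_eq_left.2 h)
  exact inf_eq_left.1 this

/-- The amalgamation relation on the disjoint union. -/
def amalgRel (h₁ : BoundedLatticeHom K L₁) (h₂ : BoundedLatticeHom K L₂) :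
    (L₁ ⊕ L₂) → (L₁ ⊕ L₂) → Prop
  | .inl a, .inl a' => a ≤ a'
  | .inl a, .inr b => ∃ c, a ≤ h₁ c ∧ h₂ c ≤ b
  | .inr b, .inl a => ∃ c, b ≤ h₂ c ∧ h₁ c ≤ a
  | .inr b, .inr b' => b ≤ b'

variable (h₁ : BoundedLatticeHom K L₁) (h₂ : BoundedLatticeHom K L₂)

theorem amalgRel_refl : ∀ x, amalgRel h₁ h₂ x x
  | .inl _ => le_refl _
  | .inr _ => le_refl _

theorem amalgRel_trans (hinj₁ : Function.Injective h₁) (hinj₂ : Function.Injective h₂) :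
    ∀ {x y z : L₁ ⊕ L₂}, amalgRel h₁ h₂ x y → amalgRel h₁ h₂ y z → amalgRel h₁ h₂ x z
  | .inl _, .inl _, .inl _, hxy, hyz => le_trans hxy hyz
  | .inl _, .inl _, .inr _, hxy, ⟨c, hc1, hc2⟩ => ⟨c, hxy.trans hc1, hc2⟩
  | .inl _, .inr _, .inl _, ⟨c, hc1, hc2⟩, ⟨c', hc1', hc2'⟩ =>
      hc1.trans (((OrderHomClass.mono h₁)
        (amalg_le_of_map_le h₂ hinj₂ (hc2.trans hc1'))).trans hc2')
  | .inl _, .inr _, .inr _, ⟨c, hc1, hc2⟩, hyz => ⟨c, hc1, hc2.trans hyz⟩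
  | .inr _, .inl _, .inl _, ⟨c, hc1, hc2⟩, hyz => ⟨c, hc1, hc2.trans hyz⟩
  | .inr _, .inl _, .inr _, ⟨c, hc1, hc2⟩, ⟨c', hc1', hc2'⟩ =>
      hc1.trans (((OrderHomClass.mono h₂)
        (amalg_le_of_map_le h₁ hinj₁ (hc2.trans hc1'))).trans hc2')
  | .inr _, .inr _, .inl _, hxy, ⟨c, hc1, hc2⟩ => ⟨c, hxy.trans hc1, hc2⟩
  | .inr _, .inr _, .inr _, hxy, hyz => le_trans hxy hyz

/-- The principal-cut embedding into the concept lattice. -/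
def amalgEmb (hinj₁ : Function.Injective h₁) (hinj₂ : Function.Injective h₂) (p : L₁ ⊕ L₂) : Concept (L₁ ⊕ L₂) (L₁ ⊕ L₂) (amalgRel h₁ h₂) where
  extent := {x | amalgRel h₁ h₂ x p}
  intent := upperPolar (amalgRel h₁ h₂) {x | amalgRel h₁ h₂ x p}
  upperPolar_extent := rfl
  lowerPolar_intent := by
    apply Set.Subset.antisymm
    · intro x hx
      exact hx (fun a ha => ha)
    · intro x hx b hb
      exact amalgRel_trans h₁ h₂ hinj₁ hinj₂ hx (hb (amalgRel_refl h₁ h₂ p))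

theorem amalgEmb_fst (hinj₁ : Function.Injective h₁) (hinj₂ : Function.Injective h₂) (p : L₁ ⊕ L₂) :
    (amalgEmb h₁ h₂ hinj₁ hinj₂ p).extent = {x | amalgRel h₁ h₂ x p} := rfl

theorem amalgEmb_snd (hinj₁ : Function.Injective h₁) (hinj₂ : Function.Injective h₂) (p : L₁ ⊕ L₂) :
    (amalgEmb h₁ h₂ hinj₁ hinj₂ p).intent = {y | amalgRel h₁ h₂ p y} := by
  apply Set.Subset.antisymm
  · intro y hy
    exact hy (amalgRel_refl h₁ h₂ p)
  · intro y hy x hx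
    exact amalgRel_trans h₁ h₂ hinj₁ hinj₂ hx hy

theorem amalgEmb_le_iff (hinj₁ : Function.Injective h₁) (hinj₂ : Function.Injective h₂) {p q : L₁ ⊕ L₂} :
    amalgEmb h₁ h₂ hinj₁ hinj₂ p ≤ amalgEmb h₁ h₂ hinj₁ hinj₂ q ↔ amalgRel h₁ h₂ p q := by
  constructor
  · intro h
    exact h (amalgRel_refl h₁ h₂ p)
  · intro h x hx
    exact amalgRel_trans h₁ h₂ hinj₁ hinj₂ hx h

end Amalg

set_option maxHeartbeats 1000000 in
/-- Superamalgamation property for the variety of bounded lattices. -/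
theorem bounded_lattices_superamalgamation
    (K L₁ L₂ : Type) [Lattice K] [BoundedOrder K] [Lattice L₁] [BoundedOrder L₁]
    [Lattice L₂] [BoundedOrder L₂]
    (h₁ : BoundedLatticeHom K L₁) (h₂ : BoundedLatticeHom K L₂)
    (hinj₁ : Function.Injective h₁) (hinj₂ : Function.Injective h₂) :
    ∃ (M : BddLat) (p₁ : BoundedLatticeHom L₁ M) (p₂ : BoundedLatticeHom L₂ M),
      Function.Injective p₁ ∧ Function.Injective p₂ ∧
      (∀ c : K, p₁ (h₁ c) = p₂ (h₂ c)) ∧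
      (∀ (a : L₁) (b : L₂), p₁ a ≤ p₂ b → ∃ c : K, a ≤ h₁ c ∧ h₂ c ≤ b) := by
  set r := amalgRel h₁ h₂ with hr
  set e := amalgEmb h₁ h₂ hinj₁ hinj₂ with he
  have hrefl := amalgRel_refl h₁ h₂
  have htrans := fun {x y z} => amalgRel_trans h₁ h₂ hinj₁ hinj₂ (x := x) (y := y) (z := z)
  have hle : ∀ {p q}, e p ≤ e q ↔ r p q := fun {p q} => amalgEmb_le_iff h₁ h₂ hinj₁ hinj₂
  have hsnd := amalgEmb_snd h₁ h₂ hinj₁ hinj₂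
  -- the two maps
  have map_inf₁ : ∀ a a' : L₁, e (.inl (a ⊓ a')) = e (.inl a) ⊓ e (.inl a') := by
    intro a a'
    apply Concept.ext
    show {x | r x (.inl (a ⊓ a'))} = {x | r x (.inl a)} ∩ {x | r x (.inl a')}
    ext x
    cases x with
    | inl y => exact le_inf_iff
    | inr y =>
      constructor
      · rintro ⟨c, hc1, hc2⟩
        exact ⟨⟨c, hc1, hc2.trans inf_le_left⟩, ⟨c, hc1, hc2.trans inf_le_right⟩⟩
      · rintro ⟨⟨c, hc1, hc2⟩, ⟨c', hc1', hc2'⟩⟩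
        refine ⟨c ⊓ c', ?_, ?_⟩
        · rw [map_inf]; exact le_inf hc1 hc1'
        · rw [map_inf]; exact inf_le_inf hc2 hc2'
  have map_inf₂ : ∀ b b' : L₂, e (.inr (b ⊓ b')) = e (.inr b) ⊓ e (.inr b') := by
    intro b b'
    apply Concept.ext
    show {x | r x (.inr (b ⊓ b'))} = {x | r x (.inr b)} ∩ {x | r x (.inr b')}
    ext x
    cases x with
    | inr y => exact le_inf_iff
    | inl y =>
      constructor
      · rintro ⟨c, hc1, hc2⟩
        exact ⟨⟨c, hc1, hc2.trans inf_le_left⟩, ⟨c, hc1, hc2.trans inf_le_right⟩⟩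
      · rintro ⟨⟨c, hc1, hc2⟩, ⟨c', hc1', hc2'⟩⟩
        refine ⟨c ⊓ c', ?_, ?_⟩
        · rw [map_inf]; exact le_inf hc1 hc1'
        · rw [map_inf]; exact inf_le_inf hc2 hc2'
  have map_sup₁ : ∀ a a' : L₁, e (.inl (a ⊔ a')) = e (.inl a) ⊔ e (.inl a') := by
    intro a a'
    apply Concept.ext'
    show _ = (e (.inl a)).intent ∩ (e (.inl a')).intent
    rw [hsnd, hsnd, hsnd]
    ext x
    cases x with
    | inl y => exact sup_le_iff
    | inr y =>
      constructor
      · rintro ⟨c, hc1, hc2⟩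
        exact ⟨⟨c, le_sup_left.trans hc1, hc2⟩, ⟨c, le_sup_right.trans hc1, hc2⟩⟩
      · rintro ⟨⟨c, hc1, hc2⟩, ⟨c', hc1', hc2'⟩⟩
        refine ⟨c ⊔ c', ?_, ?_⟩
        · rw [map_sup]; exact sup_le_sup hc1 hc1'
        · rw [map_sup]; exact sup_le hc2 hc2'
  have map_sup₂ : ∀ b b' : L₂, e (.inr (b ⊔ b')) = e (.inr b) ⊔ e (.inr b') := by
    intro b b'
    apply Concept.ext'
    show _ = (e (.inr b)).intent ∩ (e (.inr b')).intent
    rw [hsnd, hsnd, hsnd]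
    ext x
    cases x with
    | inr y => exact sup_le_iff
    | inl y =>
      constructor
      · rintro ⟨c, hc1, hc2⟩
        exact ⟨⟨c, le_sup_left.trans hc1, hc2⟩, ⟨c, le_sup_right.trans hc1, hc2⟩⟩
      · rintro ⟨⟨c, hc1, hc2⟩, ⟨c', hc1', hc2'⟩⟩
        refine ⟨c ⊔ c', ?_, ?_⟩
        · rw [map_sup]; exact sup_le_sup hc1 hc1'
        · rw [map_sup]; exact sup_le hc2 hc2'
  have map_top₁ : e (.inl (⊤ : L₁)) = ⊤ := by
    apply Concept.ext
    show {x | r x (.inl ⊤)} = Set.univ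
    apply Set.eq_univ_of_forall
    rintro (y | y)
    · exact le_top
    · exact ⟨⊤, by rw [map_top]; exact le_top, le_top⟩
  have map_top₂ : e (.inr (⊤ : L₂)) = ⊤ := by
    apply Concept.ext
    show {x | r x (.inr ⊤)} = Set.univ
    apply Set.eq_univ_of_forall
    rintro (y | y)
    · exact ⟨⊤, by rw [map_top]; exact le_top, le_top⟩
    · exact le_top
  have map_bot₁ : e (.inl (⊥ : L₁)) = ⊥ := by
    apply Concept.ext'
    show (e (.inl ⊥)).intent = Set.univ
    rw [hsnd]
    apply Set.eq_univ_of_forall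
    rintro (y | y)
    · exact bot_le
    · exact ⟨⊥, bot_le, by rw [map_bot]; exact bot_le⟩
  have map_bot₂ : e (.inr (⊥ : L₂)) = ⊥ := by
    apply Concept.ext'
    show (e (.inr ⊥)).intent = Set.univ
    rw [hsnd]
    apply Set.eq_univ_of_forall
    rintro (y | y)
    · exact ⟨⊥, bot_le, by rw [map_bot]; exact bot_le⟩
    · exact bot_le
  refine ⟨BddLat.of (ULift (Concept (L₁ ⊕ L₂) (L₁ ⊕ L₂) r)),
    ⟨⟨⟨fun a => ULift.up (e (.inl a)), fun a a' => congrArg ULift.up (map_sup₁ a a')⟩,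
      fun a a' => congrArg ULift.up (map_inf₁ a a')⟩,
      by exact congrArg ULift.up map_top₁, by exact congrArg ULift.up map_bot₁⟩,
    ⟨⟨⟨fun b => ULift.up (e (.inr b)), fun b b' => congrArg ULift.up (map_sup₂ b b')⟩,
      fun b b' => congrArg ULift.up (map_inf₂ b b')⟩,
      by exact congrArg ULift.up map_top₂, by exact congrArg ULift.up map_bot₂⟩,
    ?_, ?_, ?_, ?_⟩
  · intro a a' h
    have h' : e (.inl a) = e (.inl a') := congrArg ULift.down h
    exact le_antisymm (hle.1 h'.le) (hle.1 h'.ge)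
  · intro b b' h
    have h' : e (.inr b) = e (.inr b') := congrArg ULift.down h
    exact le_antisymm (hle.1 h'.le) (hle.1 h'.ge)
  · intro c
    show ULift.up (e (.inl (h₁ c))) = ULift.up (e (.inr (h₂ c)))
    apply congrArg ULift.up
    apply Concept.ext
    show {x | r x (.inl (h₁ c))} = {x | r x (.inr (h₂ c))}
    ext x
    constructor
    · intro hx
      exact htrans hx ⟨c, le_rfl, le_rfl⟩
    · intro hx
      exact htrans hx ⟨c, le_rfl, le_rfl⟩
  · intro a b h
    exact hle.1 h
end

section
/- Separation lemma for L-spaces: let X be a meet-semilattice with a greatest element ⊤, equipped with a compact topology such that (a) whenever ¬(x ≤ y) there is a clopen filter W with x ∈ W and y ∉ W, and (b) for all clopen filters W₁, W₂ the set {x ∈ X | ∃ y ∈ W₁, ∃ z ∈ W₂, y ⊓ z ≤ x} is clopen. Then for any closed subsets U, V ⊆ X such that U is a filter, the complement X \ V is a filter, and U ∩ V = ∅, there exists a clopen filter W with U ⊆ W and V ∩ W = ∅. -/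
/-- A filter of a meet-semilattice with top: contains ⊤, upward closed,
closed under binary infima. -/
def IsFilterT {X : Type} [SemilatticeInf X] [OrderTop X] (S : Set X) : Prop :=
  (⊤ : X) ∈ S ∧ (∀ x ∈ S, ∀ y, x ≤ y → y ∈ S) ∧ (∀ x ∈ S, ∀ y ∈ S, x ⊓ y ∈ S)

theorem isFilterT_join {X : Type} [SemilatticeInf X] [OrderTop X] {W₁ W₂ : Set X}
    (h₁ : IsFilterT W₁) (h₂ : IsFilterT W₂) :
    IsFilterT {x : X | ∃ y ∈ W₁, ∃ z ∈ W₂, y ⊓ z ≤ x} := by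
  refine ⟨⟨⊤, h₁.1, ⊤, h₂.1, le_top⟩, ?_, ?_⟩
  · rintro x ⟨y, hy, z, hz, hle⟩ w hxw
    exact ⟨y, hy, z, hz, hle.trans hxw⟩
  · rintro x ⟨y₁, hy₁, z₁, hz₁, h1⟩ w ⟨y₂, hy₂, z₂, hz₂, h2⟩
    refine ⟨y₁ ⊓ y₂, h₁.2.2 _ hy₁ _ hy₂, z₁ ⊓ z₂, h₂.2.2 _ hz₁ _ hz₂, ?_⟩
    refine le_inf (le_trans ?_ h1) (le_trans ?_ h2)
    · exact le_inf (inf_le_left.trans inf_le_left) (inf_le_right.trans inf_le_left)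
    · exact le_inf (inf_le_left.trans inf_le_right) (inf_le_right.trans inf_le_right)

/-- Separation lemma for L-spaces. -/
theorem lspace_separation (X : Type) [SemilatticeInf X] [OrderTop X]
    [TopologicalSpace X] [CompactSpace X]
    (hsep : ∀ x y : X, ¬ x ≤ y → ∃ W : Set X, IsClopen W ∧ IsFilterT W ∧ x ∈ W ∧ y ∉ W)
    (hjoin : ∀ W₁ W₂ : Set X, IsClopen W₁ → IsFilterT W₁ → IsClopen W₂ → IsFilterT W₂ →
      IsClopen {x : X | ∃ y ∈ W₁, ∃ z ∈ W₂, y ⊓ z ≤ x})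
    (U V : Set X) (hU : IsClosed U) (hV : IsClosed V)
    (hUf : IsFilterT U) (hVf : IsFilterT Vᶜ) (hdisj : U ∩ V = ∅) :
    ∃ W : Set X, IsClopen W ∧ IsFilterT W ∧ U ⊆ W ∧ V ∩ W = ∅ := by
  have key : ∀ u ∈ U, ∀ v ∈ V, ¬ u ≤ v := by
    intro u hu v hv hle
    have hvU : v ∈ U := hUf.2.1 u hu v hle
    have : v ∈ U ∩ V := ⟨hvU, hv⟩
    rw [hdisj] at this
    exact this
  -- Step B: for each u ∈ U, a clopen filter containing u and disjoint from V.
  have stepB : ∀ u ∈ U, ∃ W : Set X, IsClopen W ∧ IsFilterT W ∧ u ∈ W ∧ W ∩ V = ∅ := by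
    intro u hu
    have hf : ∀ v : V, ∃ W : Set X, IsClopen W ∧ IsFilterT W ∧ u ∈ W ∧ (v : X) ∉ W :=
      fun v => hsep u v (key u hu v v.2)
    choose f hfc hff hfu hfv using hf
    have hcover : V ⊆ ⋃ v : V, (f v)ᶜ := by
      intro x hx
      exact Set.mem_iUnion.2 ⟨⟨x, hx⟩, hfv ⟨x, hx⟩⟩
    obtain ⟨t, ht⟩ := (hV.isCompact).elim_finite_subcover (fun v : V => (f v)ᶜ)
      (fun v => (hfc v).compl.isOpen) hcover
    refine ⟨⋂ v ∈ t, f v, isClopen_biInter_finset (fun v _ => hfc v), ?_, ?_, ?_⟩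
    · refine ⟨?_, ?_, ?_⟩
      · simp only [Set.mem_iInter]
        exact fun v _ => (hff v).1
      · intro x hx y hxy
        simp only [Set.mem_iInter] at hx ⊢
        exact fun v hv => (hff v).2.1 x (hx v hv) y hxy
      · intro x hx y hy
        simp only [Set.mem_iInter] at hx hy ⊢
        exact fun v hv => (hff v).2.2 x (hx v hv) y (hy v hv)
    · simp only [Set.mem_iInter]
      exact fun v _ => hfu v
    · apply Set.eq_empty_iff_forall_notMem.2
      rintro x ⟨hxW, hxV⟩
      obtain ⟨v, hvt, hxc⟩ := Set.mem_iUnion₂.1 (ht hxV)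
      exact hxc (Set.mem_iInter₂.1 hxW v hvt)
  -- Step C: cover U by finitely many such filters and take their join.
  have hg : ∀ u : U, ∃ W : Set X, IsClopen W ∧ IsFilterT W ∧ (u : X) ∈ W ∧ W ∩ V = ∅ :=
    fun u => stepB u u.2
  choose g hgc hgf hgu hgd using hg
  have hcover : U ⊆ ⋃ u : U, g u := by
    intro x hx
    exact Set.mem_iUnion.2 ⟨⟨x, hx⟩, hgu ⟨x, hx⟩⟩
  obtain ⟨s, hs⟩ := (hU.isCompact).elim_finite_subcover (fun u : U => g u)
    (fun u => (hgc u).isOpen) hcover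
  have main : ∀ s : Finset U, ∃ W : Set X,
      IsClopen W ∧ IsFilterT W ∧ W ∩ V = ∅ ∧ ∀ u ∈ s, g u ⊆ W := by
    intro s
    classical
    induction s using Finset.induction_on with
    | empty =>
      exact ⟨g ⟨⊤, hUf.1⟩, hgc _, hgf _, hgd _, by simp⟩
    | @insert a s ha ih =>
      obtain ⟨W, hWc, hWf, hWd, hWsub⟩ := ih
      refine ⟨{x : X | ∃ y ∈ g a, ∃ z ∈ W, y ⊓ z ≤ x},
        hjoin _ _ (hgc a) (hgf a) hWc hWf, isFilterT_join (hgf a) hWf, ?_, ?_⟩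
      · apply Set.eq_empty_iff_forall_notMem.2
        rintro x ⟨⟨y, hy, z, hz, hle⟩, hxV⟩
        have hyc : y ∈ Vᶜ := fun hyV => Set.eq_empty_iff_forall_notMem.1 (hgd a) y ⟨hy, hyV⟩
        have hzc : z ∈ Vᶜ := fun hzV => Set.eq_empty_iff_forall_notMem.1 hWd z ⟨hz, hzV⟩
        have : x ∈ Vᶜ := hVf.2.1 _ (hVf.2.2 y hyc z hzc) x hle
        exact this hxV
      · intro u hu x hx
        rcases Finset.mem_insert.1 hu with rfl | hu'
        · exact ⟨x, hx, ⊤, hWf.1, inf_le_left⟩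
        · exact ⟨⊤, (hgf a).1, x, hWsub u hu' hx, inf_le_right⟩
  obtain ⟨W, hWc, hWf, hWd, hWsub⟩ := main s
  refine ⟨W, hWc, hWf, ?_, ?_⟩
  · intro x hx
    obtain ⟨u, hus, hxu⟩ := Set.mem_iUnion₂.1 (hs hx)
    exact hWsub u hus hxu
  · rw [Set.inter_comm]; exact hWd
end

section
/- Let X and Y be meet-semilattices with greatest element ⊤ and let f : Y → X be an L-morphism. Then: (1) for every filter U ⊆ Y, the upward closure {x ∈ X | ∃ u ∈ U, f(u) ≤ x} of f[U] is a filter of X; and (2) for every filter V ⊆ Y, the complement of the downward closure of f[Y \ V], i.e. the set {x ∈ X | ∀ z ∈ Y, z ∉ V → ¬(x ≤ f(z))}, is a filter of X. -/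
/-- The upward closure of the image of a filter under an L-morphism is a filter,
and the complement of the downward closure of the image of the complement of a
filter is a filter. -/
theorem lmorphism_image_filters (X Y : Type) [SemilatticeInf X] [OrderTop X]
    [SemilatticeInf Y] [OrderTop Y]
    (f : Y → X)
    (hinf : ∀ a b : Y, f (a ⊓ b) = f a ⊓ f b) (htop : f ⊤ = ⊤)
    (hcond1 : ∀ y : Y, f y = ⊤ → y = ⊤)
    (hcond2 : ∀ (x : Y) (y' z' : X), y' ⊓ z' ≤ f x →
      ∃ y z : Y, y' ≤ f y ∧ z' ≤ f z ∧ y ⊓ z ≤ x) :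
    (∀ U : Set Y, IsFilterT U → IsFilterT {x : X | ∃ u ∈ U, f u ≤ x}) ∧
    (∀ V : Set Y, IsFilterT V → IsFilterT {x : X | ∀ z : Y, z ∉ V → ¬ x ≤ f z}) := by
  have hmono : ∀ a b : Y, a ≤ b → f a ≤ f b := by
    intro a b hab
    have : a ⊓ b = a := inf_eq_left.mpr hab
    calc f a = f (a ⊓ b) := by rw [this]
      _ = f a ⊓ f b := hinf a b
      _ ≤ f b := inf_le_right
  constructor
  · intro U ⟨hU1, hU2, hU3⟩
    refine ⟨⟨⊤, hU1, le_top⟩, ?_, ?_⟩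
    · rintro x ⟨u, hu, hle⟩ y hxy
      exact ⟨u, hu, hle.trans hxy⟩
    · rintro x ⟨u, hu, hle⟩ y ⟨v, hv, hle'⟩
      exact ⟨u ⊓ v, hU3 u hu v hv, by rw [hinf]; exact inf_le_inf hle hle'⟩
  · intro V ⟨hV1, hV2, hV3⟩
    refine ⟨?_, ?_, ?_⟩
    · intro z hz hle
      exact hz (hcond1 z (le_antisymm le_top hle) ▸ hV1)
    · intro x hx y hxy z hz hle
      exact hx z hz (hxy.trans hle)
    · intro x hx y hy z hz hle
      obtain ⟨a, b, ha, hb, hab⟩ := hcond2 z x y hle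
      have haV : a ∈ V := by
        by_contra h
        exact hx a h ha
      have hbV : b ∈ V := by
        by_contra h
        exact hy b h hb
      exact hz (hV2 _ (hV3 a haV b hbV) z hab)
end

section
/- Let X, Y₁, Y₂ be meet-semilattices with greatest element ⊤, and let f₁ : Y₁ → X and f₂ : Y₂ → X be surjective L-morphisms. Let P = {(x₁, x₂) ∈ Y₁ × Y₂ | f₁(x₁) = f₂(x₂)}, a sub-meet-semilattice of the product with componentwise order, infimum, and top (⊤, ⊤). Then the first projection π₁ : P → Y₁, π₁(x₁, x₂) = x₁, is surjective and is an L-morphism; that is: π₁ preserves binary infima and ⊤; if π₁(x₁, x₂) = ⊤ then (x₁, x₂) = (⊤, ⊤); and whenever y₁ ⊓ z₁ ≤ π₁(x₁, x₂) there exist (y₁', y₂'), (z₁', z₂') ∈ P with y₁ ≤ π₁(y₁', y₂'), z₁ ≤ π₁(z₁', z₂'), and (y₁', y₂') ⊓ (z₁', z₂') ≤ (x₁, x₂). -/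
/-- An L-morphism between meet-semilattices with top. -/
def IsLMorphism {A B : Type} [SemilatticeInf A] [OrderTop A]
    [SemilatticeInf B] [OrderTop B] (f : A → B) : Prop :=
  (∀ a b : A, f (a ⊓ b) = f a ⊓ f b) ∧ f ⊤ = ⊤ ∧ (∀ a : A, f a = ⊤ → a = ⊤) ∧
  (∀ (x : A) (y' z' : B), y' ⊓ z' ≤ f x →
    ∃ y z : A, y' ≤ f y ∧ z' ≤ f z ∧ y ⊓ z ≤ x)

/-- The first projection from the pullback of two surjective L-morphisms is a
surjective L-morphism. -/
theorem pullback_projection_lmorphism (X Y₁ Y₂ : Type) [SemilatticeInf X] [OrderTop X]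
    [SemilatticeInf Y₁] [OrderTop Y₁] [SemilatticeInf Y₂] [OrderTop Y₂]
    (f₁ : Y₁ → X) (f₂ : Y₂ → X)
    (hL₁ : IsLMorphism f₁) (hL₂ : IsLMorphism f₂)
    (hsurj₁ : Function.Surjective f₁) (hsurj₂ : Function.Surjective f₂)
    (Pb : Set (Y₁ × Y₂)) (hPb : Pb = {p : Y₁ × Y₂ | f₁ p.1 = f₂ p.2}) :
    (∀ x₁ : Y₁, ∃ p ∈ Pb, p.1 = x₁) ∧
    (∀ p q : Y₁ × Y₂, (p ⊓ q).1 = p.1 ⊓ q.1) ∧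
    ((⊤ : Y₁ × Y₂).1 = ⊤ ∧ (⊤ : Y₁ × Y₂) = (⊤, ⊤)) ∧
    (∀ p ∈ Pb, p.1 = ⊤ → p = (⊤ : Y₁ × Y₂)) ∧
    (∀ p ∈ Pb, ∀ y₁ z₁ : Y₁, y₁ ⊓ z₁ ≤ p.1 →
      ∃ q ∈ Pb, ∃ r ∈ Pb, y₁ ≤ q.1 ∧ z₁ ≤ r.1 ∧ q ⊓ r ≤ p) := by
  obtain ⟨h1inf, h1top, h1refl, h1lift⟩ := hL₁
  obtain ⟨h2inf, h2top, h2refl, h2lift⟩ := hL₂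
  have hmono : ∀ a b : Y₁, a ≤ b → f₁ a ≤ f₁ b := by
    intro a b hab
    have : a ⊓ b = a := inf_eq_left.mpr hab
    calc f₁ a = f₁ (a ⊓ b) := by rw [this]
    _ = f₁ a ⊓ f₁ b := h1inf a b
    _ ≤ f₁ b := inf_le_right
  subst hPb
  refine ⟨?_, fun p q => rfl, ⟨rfl, rfl⟩, ?_, ?_⟩
  · intro x₁
    obtain ⟨x₂, hx₂⟩ := hsurj₂ (f₁ x₁)
    exact ⟨(x₁, x₂), hx₂.symm, rfl⟩
  · intro p hp h1
    have h2 : p.2 = ⊤ := h2refl p.2 (by rw [← hp, h1, h1top])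
    exact Prod.ext h1 h2
  · intro p hp y₁ z₁ hle
    -- f₁ y₁ ⊓ f₁ z₁ ≤ f₂ p.2
    have hyz : f₁ y₁ ⊓ f₁ z₁ ≤ f₂ p.2 := by
      rw [← h1inf, ← hp]; exact hmono _ _ hle
    obtain ⟨y₂, z₂, hy₂, hz₂, hinf⟩ := h2lift p.2 (f₁ y₁) (f₁ z₁) hyz
    obtain ⟨c, hc⟩ := hsurj₂ (f₁ y₁)
    obtain ⟨d, hd⟩ := hsurj₂ (f₁ z₁)
    refine ⟨(y₁, c ⊓ y₂), ?_, (z₁, d ⊓ z₂), ?_, le_refl _, le_refl _, ?_⟩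
    · show f₁ y₁ = f₂ (c ⊓ y₂)
      rw [h2inf, hc]; exact (inf_eq_left.mpr hy₂).symm
    · show f₁ z₁ = f₂ (d ⊓ z₂)
      rw [h2inf, hd]; exact (inf_eq_left.mpr hz₂).symm
    · constructor
      · exact hle
      · show (c ⊓ y₂) ⊓ (d ⊓ z₂) ≤ p.2
        exact le_trans (inf_le_inf inf_le_right inf_le_right) hinf
end

section
/- Let X and Y be meet-semilattices with greatest element ⊤ and let f : X → Y be an L-morphism. Then the preimage map f⁻¹ acts as a lattice homomorphism on filters: (1) for every filter F of Y, f⁻¹[F] is a filter of X; (2) f⁻¹[{⊤}] = {⊤}; (3) for all filters F, G of Y, f⁻¹[F ∩ G] = f⁻¹[F] ∩ f⁻¹[G]; and (4) for all filters F, G of Y, f⁻¹[{y | ∃ a ∈ F, ∃ b ∈ G, a ⊓ b ≤ y}] = {x | ∃ a ∈ f⁻¹[F], ∃ b ∈ f⁻¹[G], a ⊓ b ≤ x}. -/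
/-- Preimage under an L-morphism acts as a lattice homomorphism on filters. -/
theorem lmorphism_preimage_lattice_hom (X Y : Type) [SemilatticeInf X] [OrderTop X]
    [SemilatticeInf Y] [OrderTop Y]
    (f : X → Y) (hf : IsLMorphism f) :
    (∀ F : Set Y, IsFilterT F → IsFilterT (f ⁻¹' F)) ∧
    (f ⁻¹' ({⊤} : Set Y) = ({⊤} : Set X)) ∧
    (∀ F G : Set Y, IsFilterT F → IsFilterT G →
      f ⁻¹' (F ∩ G) = f ⁻¹' F ∩ f ⁻¹' G) ∧
    (∀ F G : Set Y, IsFilterT F → IsFilterT G →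
      f ⁻¹' {y : Y | ∃ a ∈ F, ∃ b ∈ G, a ⊓ b ≤ y} =
        {x : X | ∃ a ∈ f ⁻¹' F, ∃ b ∈ f ⁻¹' G, a ⊓ b ≤ x}) := by

  obtain ⟨hinf, htop, hrefl, hlm⟩ := hf
  have hmono : ∀ a b : X, a ≤ b → f a ≤ f b := by
    intro a b hab
    have : f (a ⊓ b) = f a ⊓ f b := hinf a b
    rw [inf_eq_left.mpr hab] at this
    exact le_of_eq_of_le this inf_le_right |>.trans_eq rfl
  constructor
  · rintro F ⟨hF1, hF2, hF3⟩
    refine ⟨by simp [Set.mem_preimage, htop, hF1], ?_, ?_⟩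
    · intro x hx y hxy
      exact hF2 (f x) hx (f y) (hmono x y hxy)
    · intro x hx y hy
      simp only [Set.mem_preimage, hinf]
      exact hF3 (f x) hx (f y) hy
  refine ⟨?_, ?_, ?_⟩
  · ext x
    simp only [Set.mem_preimage, Set.mem_singleton_iff]
    exact ⟨hrefl x, fun h => h ▸ htop⟩
  · intro F G _ _
    rfl
  · intro F G ⟨hF1, hF2, hF3⟩ ⟨hG1, hG2, hG3⟩
    ext x
    simp only [Set.mem_preimage, Set.mem_setOf_eq]
    constructor
    · rintro ⟨a, ha, b, hb, hab⟩
      obtain ⟨y, z, hy, hz, hyz⟩ := hlm x a b hab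
      exact ⟨y, hF2 a ha (f y) hy, z, hG2 b hb (f z) hz, hyz⟩
    · rintro ⟨a, ha, b, hb, hab⟩
      exact ⟨f a, ha, f b, hb, by rw [← hinf]; exact hmono _ _ hab⟩
end

section
/- Let X be a meet-semilattice with greatest element ⊤ and let R be a binary relation on X satisfying the modal L-frame conditions (i)–(v). Then for every filter F of X, the set □_R F = {x ∈ X | ∀ y, R x y → y ∈ F} is a filter of X. -/
/-- The modal L-frame conditions (i)–(v) for a relation on a meet-semilattice with top. -/
def IsModalLFrame {X : Type} [SemilatticeInf X] [OrderTop X] (R : X → X → Prop) : Prop :=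
  (∀ x y z : X, x ≤ y → R y z → ∃ w, R x w ∧ w ≤ z) ∧
  (∀ x y w : X, x ≤ y → R x w → ∃ z, R y z ∧ w ≤ z) ∧
  (∀ x y z : X, R (x ⊓ y) z → ∃ u v, R x u ∧ R y v ∧ u ⊓ v ≤ z) ∧
  (∀ x y u v : X, R x u → R y v → R (x ⊓ y) (u ⊓ v)) ∧
  (∀ x : X, R ⊤ x ↔ x = ⊤)

/-- The box of a filter along a modal L-frame relation is a filter. -/
theorem box_preserves_filters (X : Type) [SemilatticeInf X] [OrderTop X]
    (R : X → X → Prop) (hR : IsModalLFrame R)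
    (F : Set X) (hF : IsFilterT F) :
    IsFilterT {x : X | ∀ y, R x y → y ∈ F} := by
  obtain ⟨h1, h2, h3, h4, h5⟩ := hR
  obtain ⟨ftop, fup, finf⟩ := hF
  refine ⟨?_, ?_, ?_⟩
  · intro y hy
    rw [(h5 y).mp hy]
    exact ftop
  · intro x hx y hxy z hz
    obtain ⟨w, hw, hwz⟩ := h1 x y z hxy hz
    exact fup w (hx w hw) z hwz
  · intro x hx y hy z hz
    obtain ⟨u, v, hu, hv, huv⟩ := h3 x y z hz
    exact fup _ (finf u (hx u hu) v (hy v hv)) z huv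
end

section
/- Let X be a meet-semilattice with greatest element ⊤ and let R be a binary relation on X satisfying the modal L-frame conditions (i)–(v). Then for every filter F of X, the set ◇_R F = {x ∈ X | ∃ y, R x y ∧ y ∈ F} is a filter of X. -/
/-- The diamond of a filter along a modal L-frame relation is a filter. -/
theorem diamond_preserves_filters (X : Type) [SemilatticeInf X] [OrderTop X]
    (R : X → X → Prop) (hR : IsModalLFrame R)
    (F : Set X) (hF : IsFilterT F) :
    IsFilterT {x : X | ∃ y, R x y ∧ y ∈ F} := by
  obtain ⟨_, h2, _, h4, h5⟩ := hR
  obtain ⟨hFtop, hFup, hFinf⟩ := hF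
  refine ⟨⟨⊤, (h5 ⊤).mpr rfl, hFtop⟩, ?_, ?_⟩
  · rintro x ⟨w, hxw, hwF⟩ y hxy
    obtain ⟨z, hyz, hwz⟩ := h2 x y w hxy hxw
    exact ⟨z, hyz, hFup w hwF z hwz⟩
  · rintro x ⟨u, hxu, huF⟩ y ⟨v, hyv, hvF⟩
    exact ⟨u ⊓ v, h4 x y u v hxu hyv, hFinf u huF v hvF⟩
end

section
/- Let X be a meet-semilattice with greatest element ⊤, equipped with a topology, and let R be a binary relation on X satisfying the modal L-space separation condition: for all x, y ∈ X, if for every clopen filter U of X one has (∀ z, R x z → z ∈ U) → y ∈ U and y ∈ U → (∃ w, R x w ∧ w ∈ U), then R x y. Then for every x ∈ X, the set R[x] = {y | R x y} is closed in the topology and order-convex (if y ≤ z ≤ t with y, t ∈ R[x], then z ∈ R[x]). -/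
/-- In a modal L-space, every successor set is closed and order-convex. -/
theorem successor_set_closed_convex (X : Type) [SemilatticeInf X] [OrderTop X]
    [TopologicalSpace X] (R : X → X → Prop)
    (hsep : ∀ x y : X,
      (∀ U : Set X, IsClopen U → IsFilterT U →
        ((∀ z, R x z → z ∈ U) → y ∈ U) ∧ (y ∈ U → ∃ w, R x w ∧ w ∈ U)) → R x y) :
    ∀ x : X, IsClosed {y : X | R x y} ∧
      (∀ y z t : X, y ≤ z → z ≤ t → R x y → R x t → R x z) := by
  intro x
  constructor
  · rw [← isOpen_compl_iff]
    rw [isOpen_iff_forall_mem_open]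
    intro y hy
    simp only [Set.mem_compl_iff, Set.mem_setOf_eq] at hy
    have : ¬ (∀ U : Set X, IsClopen U → IsFilterT U →
        ((∀ z, R x z → z ∈ U) → y ∈ U) ∧ (y ∈ U → ∃ w, R x w ∧ w ∈ U)) := by
      intro h; exact hy (hsep x y h)
    push_neg at this
    obtain ⟨U, hUc, hUf, hbad⟩ := this
    by_cases h1 : (∀ z, R x z → z ∈ U) → y ∈ U
    · -- then the second conjunct fails: y ∈ U and no successor in U
      have h2 := hbad h1
      refine ⟨U, ?_, hUc.isOpen, h2.1⟩
      intro u hu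
      simp only [Set.mem_compl_iff, Set.mem_setOf_eq]
      intro hR
      exact h2.2 u hR hu
    · push_neg at h1
      refine ⟨Uᶜ, ?_, hUc.isClosed.isOpen_compl, h1.2⟩
      intro u hu
      simp only [Set.mem_compl_iff, Set.mem_setOf_eq] at hu ⊢
      intro hR
      exact hu (h1.1 u hR)
  · intro y z t hyz hzt hRy hRt
    apply hsep
    intro U hUc hUf
    constructor
    · intro hall
      exact hUf.2.1 y (hall y hRy) z hyz
    · intro hz
      exact ⟨t, hRt, hUf.2.1 z hz t hzt⟩
end

section
/- Directedness from the Church–Rosser condition: let X be a meet-semilattice and R a binary relation on X such that for every w ∈ X the set R[w] = {y | R w y} is order-convex and closed under binary infima. Assume that for all x, y, z, if R x y and R x z then there exist u, v with R y u, R z v, and u ≤ v. Then R is directed: for all x, y, z, if R x y and R x z then there exists t with R y t and R z t. -/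
/-- Directedness from the Church–Rosser condition. -/
theorem directed_of_church_rosser (X : Type) [SemilatticeInf X] (R : X → X → Prop)
    (hconv : ∀ w a b c : X, a ≤ b → b ≤ c → R w a → R w c → R w b)
    (hmeet : ∀ w a b : X, R w a → R w b → R w (a ⊓ b))
    (hCR : ∀ x y z : X, R x y → R x z → ∃ u v : X, R y u ∧ R z v ∧ u ≤ v) :
    ∀ x y z : X, R x y → R x z → ∃ t : X, R y t ∧ R z t := by
  intro x y z hxy hxz
  obtain ⟨u, v, hyu, hzv, huv⟩ := hCR x y z hxy hxz
  obtain ⟨u', v', hzu', hyv', huv'⟩ := hCR x z y hxz hxy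
  refine ⟨v ⊓ v', ?_, ?_⟩
  · -- u ⊓ v' ∈ R y, and u ⊓ v' ≤ v ⊓ v' ≤ v'
    exact hconv y (u ⊓ v') (v ⊓ v') v'
      (inf_le_inf_right v' huv) inf_le_right
      (hmeet y u v' hyu hyv') hyv'
  · -- u' ⊓ v ∈ R z, and u' ⊓ v ≤ v' ⊓ v, rewrite
    have h1 : R z (u' ⊓ v) := hmeet z u' v hzu' hzv
    exact hconv z (u' ⊓ v) (v ⊓ v') v
      (by simp only [inf_comm v v']; exact inf_le_inf_right v huv') inf_le_left
      h1 hzv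
end

section
/- Symmetry from the B-conditions: let X be a partially ordered set and R a binary relation on X such that for every x ∈ X the set R[x] = {y | R x y} is order-convex. Assume that for all x, y with R x y there exists z₁ with R y z₁ and x ≤ z₁, and there exists z₂ with R y z₂ and z₂ ≤ x. Then R is symmetric. -/
/-- Symmetry from the B-conditions. -/
theorem symmetric_of_B_conditions (X : Type) [PartialOrder X] (R : X → X → Prop)
    (hconv : ∀ x a b c : X, a ≤ b → b ≤ c → R x a → R x c → R x b)
    (hB1 : ∀ x y : X, R x y → ∃ z₁ : X, R y z₁ ∧ x ≤ z₁)
    (hB2 : ∀ x y : X, R x y → ∃ z₂ : X, R y z₂ ∧ z₂ ≤ x) :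
    ∀ x y : X, R x y → R y x := by
  intro x y hxy
  obtain ⟨z₁, hz₁, hx₁⟩ := hB1 x y hxy
  obtain ⟨z₂, hz₂, hx₂⟩ := hB2 x y hxy
  exact hconv y z₂ x z₁ hx₂ hx₁ hz₂ hz₁
end

section
/- The inclusion of the three-element chain into the four-element Boolean algebra is an epimorphism of bounded distributive lattices: for every distributive bounded lattice M and every pair of bounded lattice homomorphisms f, g : Bool × Bool → M (where Bool × Bool carries the componentwise lattice structure, i.e., it is the four-element Boolean algebra), if f(true, false) = g(true, false) then f = g. -/
/-- The inclusion of the three-element chain into the four-element Boolean algebra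
is an epimorphism of bounded distributive lattices: two bounded lattice
homomorphisms from `Bool × Bool` to a distributive bounded lattice agreeing on
`(true, false)` are equal. -/
theorem three_chain_into_four_boolean_epi (M : Type) [DistribLattice M] [BoundedOrder M]
    (f g : BoundedLatticeHom (Bool × Bool) M)
    (h : f (true, false) = g (true, false)) : f = g := by
  have hbot : ((false, false) : Bool × Bool) = ⊥ := rfl
  have htop : ((true, true) : Bool × Bool) = ⊤ := rfl
  have key : f (false, true) = g (false, true) := by
    apply eq_of_inf_eq_sup_eq (a := f (true, false))
    · have h1 : f (true, false) ⊓ f (false, true) = ⊥ := by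
        rw [← map_inf]; exact map_bot f
      have h2 : f (true, false) ⊓ g (false, true) = ⊥ := by
        rw [h, ← map_inf]; exact map_bot g
      rw [inf_comm (f (false, true)), inf_comm (g (false, true)), h1, h2]
    · have h1 : f (true, false) ⊔ f (false, true) = ⊤ := by
        rw [← map_sup]; exact map_top f
      have h2 : f (true, false) ⊔ g (false, true) = ⊤ := by
        rw [h, ← map_sup]; exact map_top g
      rw [sup_comm (f (false, true)), sup_comm (g (false, true)), h1, h2]
  ext ⟨x, y⟩
  cases x <;> cases y
  · rw [hbot, map_bot, map_bot]
  · exact key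
  · exact h
  · rw [htop, map_top, map_top]
end

section
/- Every HMS-space is a complete lattice: let X be a meet-semilattice with greatest element ⊤, equipped with a compact topology such that whenever ¬(x ≤ y) there exists a clopen subset W of X that is upward closed and closed under binary infima, with x ∈ W and y ∉ W. Then every subset of X has a least upper bound and a greatest lower bound in X. -/
open Filter Set Topology

private lemma hms_exists_glb (X : Type) [SemilatticeInf X] [OrderTop X]
    [TopologicalSpace X] [CompactSpace X]
    (hsep : ∀ x y : X, ¬ x ≤ y → ∃ W : Set X, IsClopen W ∧
      (∀ a ∈ W, ∀ b, a ≤ b → b ∈ W) ∧ (∀ a ∈ W, ∀ b ∈ W, a ⊓ b ∈ W) ∧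
      x ∈ W ∧ y ∉ W) (S : Set X) : ∃ b : X, IsGLB S b := by
  classical
  rcases S.eq_empty_or_nonempty with rfl | ⟨x₀, hx₀⟩
  · exact ⟨⊤, isGLB_empty⟩
  set s₀ : S := ⟨x₀, hx₀⟩
  set f : Finset S → X := fun F => (insert s₀ F).inf' (Finset.insert_nonempty _ _)
      (fun z => (z : X)) with hf
  have hle : ∀ (F : Finset S) (z : S), z ∈ insert s₀ F → f F ≤ (z : X) := by
    intro F z hz
    exact Finset.inf'_le _ hz
  obtain ⟨p, hp⟩ := exists_clusterPt_of_compactSpace (Filter.map f Filter.atTop)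
  refine ⟨p, ?_, ?_⟩
  · -- p is a lower bound of S
    intro x hx
    by_contra hnle
    obtain ⟨W, hWclopen, hWup, _, hpW, hxW⟩ := hsep p x hnle
    have hW : W ∈ 𝓝 p := hWclopen.2.mem_nhds hpW
    have hV : f '' (Set.Ici ({⟨x, hx⟩} : Finset S)) ∈ Filter.map f Filter.atTop :=
      Filter.image_mem_map (Filter.Ici_mem_atTop _)
    obtain ⟨y, hFW, F, hF, rfl⟩ := clusterPt_iff_nonempty.mp hp hW hV
    have : f F ≤ x := hle F ⟨x, hx⟩ (Finset.mem_insert_of_mem (hF (Finset.mem_singleton_self _)))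
    exact hxW (hWup _ hFW _ this)
  · -- p is greatest among lower bounds
    intro b hb
    by_contra hnle
    obtain ⟨W, hWclopen, hWup, _, hbW, hpW⟩ := hsep b p hnle
    have hWc : Wᶜ ∈ 𝓝 p := hWclopen.1.isOpen_compl.mem_nhds hpW
    have hV : f '' Set.univ ∈ Filter.map f Filter.atTop :=
      Filter.image_mem_map Filter.univ_mem
    obtain ⟨y, hFW, F, -, rfl⟩ := clusterPt_iff_nonempty.mp hp hWc hV
    have hbf : b ≤ f F := Finset.le_inf' _ _ fun z _ => hb z.2
    exact hFW (hWup _ hbW _ hbf)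

/-- Every HMS-space is a complete lattice: every subset has a least upper bound
and a greatest lower bound. -/
theorem hms_space_complete_lattice (X : Type) [SemilatticeInf X] [OrderTop X]
    [TopologicalSpace X] [CompactSpace X]
    (hsep : ∀ x y : X, ¬ x ≤ y → ∃ W : Set X, IsClopen W ∧
      (∀ a ∈ W, ∀ b, a ≤ b → b ∈ W) ∧ (∀ a ∈ W, ∀ b ∈ W, a ⊓ b ∈ W) ∧
      x ∈ W ∧ y ∉ W) :
    ∀ S : Set X, (∃ a : X, IsLUB S a) ∧ (∃ b : X, IsGLB S b) := by
  intro S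
  have hglb : ∀ T : Set X, ∃ b : X, IsGLB T b := hms_exists_glb X hsep
  refine ⟨?_, hglb S⟩
  obtain ⟨b, hb⟩ := hglb (upperBounds S)
  exact ⟨b, fun x hx => hb.2 fun u hu => hu hx, fun u hu => hb.1 hu⟩
end
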